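/- arXiv:2108.08462 — 3 statements merged into one kernel-verified Lean document; each statement's English description precedes it below -/
import Mathlib

section
/- Suppose a family of matrices {A_i : i ∈ I} admits symmetric matrices P_i ≥ I with A_i^T P_i + P_i A_i ≤ -λ P_i for all i, and P_i ≤ μ P_j for all i,j, with λ > 0 and μ ≥ 1. If a piecewise-constant switching signal σ has dwell time τ_d ≥ ln(μ)/λ, then the switched Lyapunov function V(t) = x(t)^T P_{σ(t)} x(t) along solutions of ẋ = A_{σ(t)} x satisfies V(t_{k+1}) ≤ V(t_k) at consecutive switching times, i.e., V is nonincreasing over switching intervals. -/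
open Matrix

private lemma quadDeriv {n : ℕ} (M : Matrix (Fin n) (Fin n) ℝ) {x : ℝ → Fin n → ℝ}
    {x' : Fin n → ℝ} {s : ℝ} (hx : HasDerivAt x x' s) :
    HasDerivAt (fun s => x s ⬝ᵥ M *ᵥ x s) (x' ⬝ᵥ M *ᵥ x s + x s ⬝ᵥ M *ᵥ x') s := by
  have hxi : ∀ j, HasDerivAt (fun s => x s j) (x' j) s := fun j => hasDerivAt_pi.1 hx j
  have hMx : ∀ j, HasDerivAt (fun s => (M *ᵥ x s) j) ((M *ᵥ x') j) s := by
    intro j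
    simp only [mulVec, dotProduct]
    exact HasDerivAt.fun_sum fun l _ => (hxi l).const_mul (M j l)
  have h := HasDerivAt.fun_sum (fun j (_ : j ∈ Finset.univ) => ((hxi j).mul (hMx j)))
  simpa [dotProduct, Finset.sum_add_distrib] using h

private lemma lyapIneq {n : ℕ} {A P : Matrix (Fin n) (Fin n) ℝ} {lam : ℝ}
    (h : ((-(lam • P)) - (Aᵀ * P + P * A)).PosSemidef) (v : Fin n → ℝ) :
    (A *ᵥ v) ⬝ᵥ P *ᵥ v + v ⬝ᵥ P *ᵥ (A *ᵥ v) ≤ -(lam * (v ⬝ᵥ P *ᵥ v)) := by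
  have h2 := h.dotProduct_mulVec_nonneg v
  have e1 : v ⬝ᵥ (Aᵀ * P) *ᵥ v = (A *ᵥ v) ⬝ᵥ P *ᵥ v := by
    rw [← mulVec_mulVec, dotProduct_mulVec, vecMul_transpose]
  have e2 : v ⬝ᵥ (P * A) *ᵥ v = v ⬝ᵥ P *ᵥ (A *ᵥ v) := by
    rw [← mulVec_mulVec]
  simp only [sub_mulVec, add_mulVec, neg_mulVec, smul_mulVec, dotProduct_sub,
    dotProduct_add, dotProduct_neg, dotProduct_smul, smul_eq_mul, star_trivial, e1, e2] at h2
  linarith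

/-- Dwell-time switched Lyapunov function is nonincreasing at consecutive switching
times: under `P i ≥ I`, `A iᵀ P i + P i A i ≤ -λ P i`, `P i ≤ μ P j`, and dwell time
`τ_d ≥ ln μ / λ`, along solutions of `ẋ = A (σ t) x` the function
`V(t) = x(t)ᵀ P_{σ(t)} x(t)` satisfies `V(t_{k+1}) ≤ V(t_k)`. -/
theorem switched_lyapunov_nonincreasing_at_switches {n : ℕ} {I : Type*}
    (A P : I → Matrix (Fin n) (Fin n) ℝ) (lam mu : ℝ)
    (hlam : 0 < lam) (hmu : 1 ≤ mu)
    (hPsymm : ∀ i, (P i).IsSymm)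
    (hPgeI : ∀ i, (P i - 1).PosSemidef)
    (hLyap : ∀ i, ((-(lam • P i)) - ((A i)ᵀ * P i + P i * A i)).PosSemidef)
    (hPmu : ∀ i j, (mu • P j - P i).PosSemidef)
    (σ : ℝ → I) (t : ℕ → ℝ) (ht0 : t 0 = 0) (htmono : StrictMono t)
    (hdwell : ∀ k, Real.log mu / lam ≤ t (k + 1) - t k)
    (hσconst : ∀ k, ∀ s ∈ Set.Ico (t k) (t (k + 1)), σ s = σ (t k))
    (x : ℝ → (Fin n → ℝ)) (hx : ∀ s, HasDerivAt x ((A (σ s)).mulVec (x s)) s) :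
    ∀ k, x (t (k + 1)) ⬝ᵥ (P (σ (t (k + 1)))).mulVec (x (t (k + 1))) ≤
      x (t k) ⬝ᵥ (P (σ (t k))).mulVec (x (t k)) := by
  intro k
  set i := σ (t k) with hi
  set a := t k with ha
  set b := t (k + 1) with hb
  have hab : a < b := htmono (Nat.lt_succ_self k)
  set W : ℝ → ℝ := fun s => x s ⬝ᵥ (P i) *ᵥ x s with hWdef
  set g : ℝ → ℝ := fun s => Real.exp (lam * s) * W s with hgdef
  -- derivative of g everywhere
  have hWd : ∀ s, HasDerivAt W
      ((A (σ s) *ᵥ x s) ⬝ᵥ (P i) *ᵥ x s + x s ⬝ᵥ (P i) *ᵥ (A (σ s) *ᵥ x s)) s :=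
    fun s => quadDeriv (P i) (hx s)
  have hed : ∀ s : ℝ, HasDerivAt (fun s => Real.exp (lam * s))
      (Real.exp (lam * s) * lam) s := fun s => by
    simpa using ((hasDerivAt_id s).const_mul lam).exp
  have hgd : ∀ s, HasDerivAt g
      (Real.exp (lam * s) * lam * W s +
        Real.exp (lam * s) *
          ((A (σ s) *ᵥ x s) ⬝ᵥ (P i) *ᵥ x s + x s ⬝ᵥ (P i) *ᵥ (A (σ s) *ᵥ x s))) s :=
    fun s => (hed s).mul (hWd s)
  -- g is antitone on [a,b]
  have hanti : AntitoneOn g (Set.Icc a b) := by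
    apply antitoneOn_of_deriv_nonpos (convex_Icc a b)
    · exact (Continuous.continuousOn (by
        exact continuous_iff_continuousAt.2 fun s => (hgd s).continuousAt))
    · intro s hs
      exact ((hgd s).differentiableAt).differentiableWithinAt
    · intro s hs
      rw [interior_Icc] at hs
      rw [(hgd s).deriv]
      have hσs : σ s = i := hσconst k s ⟨le_of_lt hs.1, hs.2⟩
      rw [hσs]
      have hkey := lyapIneq (hLyap i) (x s)
      have hexp : (0:ℝ) < Real.exp (lam * s) := Real.exp_pos _
      have hWs : (A i *ᵥ x s) ⬝ᵥ (P i) *ᵥ x s + x s ⬝ᵥ (P i) *ᵥ (A i *ᵥ x s)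
          ≤ -(lam * W s) := hkey
      nlinarith [mul_le_mul_of_nonneg_left hWs (le_of_lt hexp)]
  have hg : g b ≤ g a := hanti (Set.left_mem_Icc.2 hab.le) (Set.right_mem_Icc.2 hab.le) hab.le
  -- W a ≥ 0
  have hWa0 : 0 ≤ W a := by
    have h1 := (hPgeI i).dotProduct_mulVec_nonneg (x a)
    have h2 : (0:ℝ) ≤ x a ⬝ᵥ x a := by
      simp only [dotProduct]
      exact Finset.sum_nonneg fun j _ => mul_self_nonneg _
    simp only [sub_mulVec, dotProduct_sub, Matrix.one_mulVec, star_trivial] at h1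
    simp only [hWdef]
    linarith
  -- W b ≤ exp(lam*(a-b)) * W a
  have hWb : W b ≤ Real.exp (lam * a - lam * b) * W a := by
    have hexpb : (0:ℝ) < Real.exp (lam * b) := Real.exp_pos _
    have : Real.exp (lam * b) * W b ≤ Real.exp (lam * a) * W a := hg
    have h3 : W b ≤ Real.exp (lam * a) / Real.exp (lam * b) * W a := by
      rw [div_mul_eq_mul_div, le_div_iff₀ hexpb]
      linarith [this]
    rwa [← Real.exp_sub] at h3
  -- mu comparison at b
  have hmub : x b ⬝ᵥ (P (σ b)) *ᵥ x b ≤ mu * W b := by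
    have h1 := (hPmu (σ b) i).dotProduct_mulVec_nonneg (x b)
    simp only [sub_mulVec, dotProduct_sub, smul_mulVec, dotProduct_smul,
      smul_eq_mul, star_trivial] at h1
    simp only [hWdef]
    linarith
  -- mu * exp factor ≤ 1
  have hfac : mu * Real.exp (lam * a - lam * b) ≤ 1 := by
    have hmu0 : (0:ℝ) < mu := lt_of_lt_of_le one_pos hmu
    have hd := hdwell k
    have hlog : Real.log mu ≤ lam * (b - a) := by
      rw [div_le_iff₀ hlam] at hd
      calc Real.log mu ≤ (b - a) * lam := hd
        _ = lam * (b - a) := by ring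
    have : Real.exp (lam * a - lam * b) ≤ mu⁻¹ := by
      rw [← Real.exp_log hmu0, ← Real.exp_neg]
      exact Real.exp_le_exp.2 (by linarith)
    calc mu * Real.exp (lam * a - lam * b) ≤ mu * mu⁻¹ :=
          mul_le_mul_of_nonneg_left this (le_of_lt (lt_of_lt_of_le one_pos hmu))
      _ = 1 := mul_inv_cancel₀ (ne_of_gt (lt_of_lt_of_le one_pos hmu))
  have hmu0 : (0:ℝ) ≤ mu := le_trans zero_le_one hmu
  calc x b ⬝ᵥ (P (σ b)) *ᵥ x b ≤ mu * W b := hmub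
    _ ≤ mu * (Real.exp (lam * a - lam * b) * W a) :=
        mul_le_mul_of_nonneg_left hWb hmu0
    _ = (mu * Real.exp (lam * a - lam * b)) * W a := by ring
    _ ≤ 1 * W a := mul_le_mul_of_nonneg_right hfac hWa0
    _ = W a := one_mul _
end

section
/- Under the dwell-time switched Lyapunov conditions (P_i ≥ I, A_i^T P_i + P_i A_i ≤ -λ P_i, P_i ≤ μ P_j, dwell time τ_d ≥ ln(μ)/((1-a*)λ) for some a* ∈ (0,1)), every solution of the switched linear system ẋ = A_{σ(t)} x converges to zero exponentially; in particular ‖x(t)‖² ≤ μ·λ̄(P_{σ(0)})·e^{-a* λ t}‖x(0)‖² for all t ≥ 0 up to a multiplicative constant depending only on μ, λ, a*. -/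
open Matrix

namespace SwitchedAux

variable {n : ℕ}

lemma quad_nonneg {M : Matrix (Fin n) (Fin n) ℝ} (hM : M.PosSemidef) (v : Fin n → ℝ) :
    0 ≤ v ⬝ᵥ M *ᵥ v := by simpa using hM.dotProduct_mulVec_nonneg v

lemma quad_le {M N : Matrix (Fin n) (Fin n) ℝ} (h : (N - M).PosSemidef) (v : Fin n → ℝ) :
    v ⬝ᵥ M *ᵥ v ≤ v ⬝ᵥ N *ᵥ v := by
  have h2 := quad_nonneg h v
  rw [sub_mulVec, dotProduct_sub] at h2
  linarith

lemma quad_le_sup_eig {M : Matrix (Fin n) (Fin n) ℝ} (hM : M.IsHermitian)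
    (v : Fin n → ℝ) : v ⬝ᵥ M *ᵥ v ≤ (⨆ j, hM.eigenvalues j) * (v ⬝ᵥ v) := by
  rcases Nat.eq_zero_or_pos n with h0 | hn
  · subst h0
    simp [dotProduct]
  · have : Nonempty (Fin n) := Fin.pos_iff_nonempty.mp hn
    set c := ⨆ j, hM.eigenvalues j with hc
    have hle : ∀ j, hM.eigenvalues j ≤ c := fun j =>
      le_ciSup (Set.Finite.bddAbove (Set.finite_range _)) j
    have hpsd : (c • (1 : Matrix (Fin n) (Fin n) ℝ) - M).PosSemidef := by
      have hspec := hM.spectral_theorem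
      have hU : (hM.eigenvectorUnitary : Matrix (Fin n) (Fin n) ℝ) *
          star (hM.eigenvectorUnitary : Matrix (Fin n) (Fin n) ℝ) = 1 :=
        (Matrix.mem_unitaryGroup_iff).mp hM.eigenvectorUnitary.2
      have key : c • (1 : Matrix (Fin n) (Fin n) ℝ) - M =
          (hM.eigenvectorUnitary : Matrix (Fin n) (Fin n) ℝ) *
            (diagonal (fun j => c - hM.eigenvalues j)) *
            star (hM.eigenvectorUnitary : Matrix (Fin n) (Fin n) ℝ) := by
        have : (diagonal (fun j => c - hM.eigenvalues j) : Matrix (Fin n) (Fin n) ℝ) =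
            c • 1 - diagonal (RCLike.ofReal ∘ hM.eigenvalues) := by
          ext i j
          by_cases h : i = j <;>
            simp [h, Matrix.diagonal_apply, Matrix.one_apply, Function.comp]
        rw [this, Matrix.mul_sub, Matrix.sub_mul, Matrix.mul_smul, Matrix.smul_mul,
          Matrix.mul_one, hU]
        exact congrArg (c • 1 - ·) hspec
      rw [key]
      exact (posSemidef_diagonal_iff.mpr (fun j => by simpa using hle j)).mul_mul_conjTranspose_same _
    have h2 := quad_nonneg hpsd v
    rw [sub_mulVec, dotProduct_sub, smul_mulVec, one_mulVec, dotProduct_smul] at h2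
    simpa using h2


lemma hasDerivAt_quad (Q : Matrix (Fin n) (Fin n) ℝ) {x : ℝ → Fin n → ℝ}
    {v : Fin n → ℝ} {s : ℝ} (hx : HasDerivAt x v s) :
    HasDerivAt (fun r => x r ⬝ᵥ Q *ᵥ x r)
      (v ⬝ᵥ Q *ᵥ x s + x s ⬝ᵥ Q *ᵥ v) s := by
  have hxi : ∀ i, HasDerivAt (fun r => x r i) (v i) s := fun i =>
    (hasDerivAt_pi.mp hx) i
  have key : HasDerivAt (fun r => ∑ i, ∑ j, x r i * (Q i j * x r j))
      (∑ i, ∑ j, (v i * (Q i j * x s j) + x s i * (Q i j * v j))) s := by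
    apply HasDerivAt.fun_sum
    intro i _
    apply HasDerivAt.fun_sum
    intro j _
    exact (hxi i).mul ((hxi j).const_mul (Q i j))
  have e1 : (fun r => ∑ i, ∑ j, x r i * (Q i j * x r j)) =
      (fun r => x r ⬝ᵥ Q *ᵥ x r) := by
    funext r
    simp [dotProduct, mulVec, Finset.mul_sum]
  have e2 : (∑ i, ∑ j, (v i * (Q i j * x s j) + x s i * (Q i j * v j))) =
      v ⬝ᵥ Q *ᵥ x s + x s ⬝ᵥ Q *ᵥ v := by
    rw [Finset.sum_congr rfl (fun i _ => Finset.sum_add_distrib), Finset.sum_add_distrib]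
    simp [dotProduct, mulVec, Finset.mul_sum]
  rw [← e1, ← e2]
  exact key

lemma exp_decay_on {V V' : ℝ → ℝ} {lam a b : ℝ}
    (hV : ∀ s, HasDerivAt V (V' s) s)
    (hle : ∀ s ∈ Set.Ico a b, V' s ≤ -lam * V s) :
    ∀ s ∈ Set.Icc a b, V s ≤ Real.exp (-lam * (s - a)) * V a := by
  intro s hs
  have hF : ∀ r, HasDerivAt (fun u => Real.exp (lam * u) * V u)
      (Real.exp (lam * r) * lam * V r + Real.exp (lam * r) * V' r) r := by
    intro r
    have h1 : HasDerivAt (fun u => Real.exp (lam * u)) (Real.exp (lam * r) * lam) r := by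
      simpa using ((hasDerivAt_id r).const_mul lam).exp
    exact h1.mul (hV r)
  have hanti : AntitoneOn (fun u => Real.exp (lam * u) * V u) (Set.Icc a b) := by
    apply antitoneOn_of_deriv_nonpos (convex_Icc a b)
    · exact fun r _ => ((hF r).continuousAt).continuousWithinAt
    · intro r hr
      exact ((hF r).differentiableAt).differentiableWithinAt
    · intro r hr
      rw [interior_Icc] at hr
      rw [(hF r).deriv]
      have := hle r ⟨le_of_lt hr.1, hr.2⟩
      nlinarith [Real.exp_pos (lam * r)]
  have h := hanti ⟨le_refl a, hs.1.trans hs.2⟩ hs hs.1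
  have hpos := Real.exp_pos (lam * s)
  have h3 : V s ≤ (Real.exp (lam * a) * V a) / Real.exp (lam * s) := by
    rw [le_div_iff₀ hpos]
    simp only at h
    nlinarith [h]
  have h4 : Real.exp (-lam * (s - a)) = Real.exp (lam * a) / Real.exp (lam * s) := by
    rw [← Real.exp_sub]; ring_nf
  rw [h4, div_mul_eq_mul_div]
  exact h3

lemma herm_eq_of_posSemidef {M N : Matrix (Fin n) (Fin n) ℝ}
    (hM : M.IsHermitian) (hN : N.IsHermitian)
    (h1 : (M - N).PosSemidef) (h2 : (N - M).PosSemidef) : M = N := by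
  have hquad : ∀ v : Fin n → ℝ, v ⬝ᵥ (M - N) *ᵥ v = 0 := by
    intro v
    have a1 : 0 ≤ v ⬝ᵥ (M - N) *ᵥ v := by simpa using h1.dotProduct_mulVec_nonneg v
    have a2 : 0 ≤ v ⬝ᵥ (N - M) *ᵥ v := by simpa using h2.dotProduct_mulVec_nonneg v
    rw [sub_mulVec, dotProduct_sub] at a1 a2
    rw [sub_mulVec, dotProduct_sub]
    linarith
  have hsymm : ∀ i j, (M - N) i j = (M - N) j i := by
    intro i j
    have := (hM.sub hN).apply j i
    simpa using this
  have hdiag : ∀ i, (M - N) i i = 0 := by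
    intro i
    have := hquad (Pi.single i 1)
    simpa [dotProduct, mulVec, Pi.single_apply, Finset.sum_ite_eq] using this
  have : M - N = 0 := by
    ext i j
    have hq := hquad (Pi.single i 1 + Pi.single j 1)
    rw [mulVec_add, dotProduct_add, add_dotProduct, add_dotProduct] at hq
    have e : ∀ a b : Fin n, Pi.single a (1:ℝ) ⬝ᵥ (M - N) *ᵥ Pi.single b 1 = (M - N) a b := by
      intro a b
      simp [dotProduct, mulVec, Pi.single_apply, Finset.sum_ite_eq]
    rw [e, e, e, e, hdiag, hdiag, hsymm i j] at hq
    simp only [Matrix.zero_apply]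
    linarith [hsymm i j]
  have := sub_eq_zero.mp this
  exact this


end SwitchedAux

open SwitchedAux in
/-- Exponential stability of a switched linear system under dwell-time switched Lyapunov
conditions: `‖x(t)‖² ≤ C · μ · λ̄(P_{σ(0)}) · e^{-a⋆ λ t} ‖x(0)‖²` for a constant `C`
depending only on `μ, λ, a⋆` (here `‖v‖² = v ⬝ᵥ v` is the squared Euclidean norm and
`λ̄` the largest eigenvalue). -/
theorem switched_system_exponential_stability {n : ℕ} {I : Type*}
    (A P : I → Matrix (Fin n) (Fin n) ℝ) (lam mu astar : ℝ)
    (hlam : 0 < lam) (hmu : 1 ≤ mu) (hastar : astar ∈ Set.Ioo (0 : ℝ) 1)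
    (hPherm : ∀ i, (P i).IsHermitian)
    (hPgeI : ∀ i, (P i - 1).PosSemidef)
    (hLyap : ∀ i, ((-(lam • P i)) - ((A i)ᵀ * P i + P i * A i)).PosSemidef)
    (hPmu : ∀ i j, (mu • P j - P i).PosSemidef)
    (σ : ℝ → I) (t : ℕ → ℝ) (ht0 : t 0 = 0) (htmono : StrictMono t)
    (hdwell : ∀ k, Real.log mu / ((1 - astar) * lam) ≤ t (k + 1) - t k)
    (hσconst : ∀ k, ∀ s ∈ Set.Ico (t k) (t (k + 1)), σ s = σ (t k))
    (x : ℝ → (Fin n → ℝ)) (hx : ∀ s, HasDerivAt x ((A (σ s)).mulVec (x s)) s) :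
    ∃ C > (0 : ℝ), ∀ s ≥ (0 : ℝ),
      x s ⬝ᵥ x s ≤
        C * mu * (⨆ j, (hPherm (σ 0)).eigenvalues j) *
          Real.exp (-(astar * lam) * s) * (x 0 ⬝ᵥ x 0) := by
  -- quadratic form facts
  have hIleP : ∀ (i : I) (v : Fin n → ℝ), v ⬝ᵥ v ≤ v ⬝ᵥ P i *ᵥ v := by
    intro i v
    have := quad_le (hPgeI i) v
    rwa [one_mulVec] at this
  have hself : ∀ v : Fin n → ℝ, 0 ≤ v ⬝ᵥ v := by
    intro v
    exact Finset.sum_nonneg fun i _ => mul_self_nonneg _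
  have hVnn : ∀ (i : I) (v : Fin n → ℝ), 0 ≤ v ⬝ᵥ P i *ᵥ v :=
    fun i v => (hself v).trans (hIleP i v)
  have hmuquad : ∀ (i j : I) (v : Fin n → ℝ),
      v ⬝ᵥ P i *ᵥ v ≤ mu * (v ⬝ᵥ P j *ᵥ v) := by
    intro i j v
    have := quad_le (hPmu i j) v
    rwa [smul_mulVec, dotProduct_smul, smul_eq_mul] at this
  -- Lyapunov quadratic inequality
  have hq : ∀ (i : I) (v : Fin n → ℝ),
      (A i *ᵥ v) ⬝ᵥ P i *ᵥ v + v ⬝ᵥ P i *ᵥ (A i *ᵥ v) ≤ -lam * (v ⬝ᵥ P i *ᵥ v) := by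
    intro i v
    have h0 := quad_nonneg (hLyap i) v
    have e1 : v ⬝ᵥ ((A i)ᵀ * P i) *ᵥ v = (A i *ᵥ v) ⬝ᵥ P i *ᵥ v := by
      rw [← mulVec_mulVec, dotProduct_mulVec, vecMul_transpose]
    have e2 : v ⬝ᵥ (P i * A i) *ᵥ v = v ⬝ᵥ P i *ᵥ (A i *ᵥ v) := by
      rw [← mulVec_mulVec]
    rw [sub_mulVec, dotProduct_sub, add_mulVec, dotProduct_add, e1, e2,
      neg_mulVec, dotProduct_neg, smul_mulVec, dotProduct_smul, smul_eq_mul] at h0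
    linarith
  -- decay on one switching interval
  have hInt : ∀ (k : ℕ), ∀ s ∈ Set.Icc (t k) (t (k+1)),
      x s ⬝ᵥ P (σ (t k)) *ᵥ x s ≤
        Real.exp (-lam * (s - t k)) * (x (t k) ⬝ᵥ P (σ (t k)) *ᵥ x (t k)) := by
    intro k
    apply exp_decay_on
      (V' := fun r => (A (σ r) *ᵥ x r) ⬝ᵥ P (σ (t k)) *ᵥ x r
        + x r ⬝ᵥ P (σ (t k)) *ᵥ (A (σ r) *ᵥ x r))
    · intro r
      exact hasDerivAt_quad _ (hx r)
    · intro r hr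
      rw [hσconst k r hr]
      exact hq (σ (t k)) (x r)
  -- dwell-time exponential comparison
  have hexp : ∀ Δ : ℝ, Real.log mu / ((1 - astar) * lam) ≤ Δ →
      mu * Real.exp (-lam * Δ) ≤ Real.exp (-(astar * lam) * Δ) := by
    intro Δ hΔ
    have hpos : 0 < (1 - astar) * lam := mul_pos (by linarith [hastar.2]) hlam
    have h1 : Real.log mu ≤ (1 - astar) * lam * Δ := by
      rw [div_le_iff₀ hpos] at hΔ
      linarith [hΔ]
    have h2 : mu ≤ Real.exp ((1 - astar) * lam * Δ) := by
      calc mu = Real.exp (Real.log mu) := (Real.exp_log (by linarith)).symm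
        _ ≤ _ := Real.exp_le_exp.mpr h1
    calc mu * Real.exp (-lam * Δ)
        ≤ Real.exp ((1 - astar) * lam * Δ) * Real.exp (-lam * Δ) :=
          mul_le_mul_of_nonneg_right h2 (Real.exp_pos _).le
      _ = Real.exp (-(astar * lam) * Δ) := by rw [← Real.exp_add]; ring_nf
  refine ⟨1, one_pos, ?_⟩
  intro s hs
  -- set the common bound value
  set lbar := ⨆ j, (hPherm (σ 0)).eigenvalues j with hlbar
  have hkey : x s ⬝ᵥ x s ≤ Real.exp (-(astar * lam) * s) * (x 0 ⬝ᵥ P (σ 0) *ᵥ x 0) := by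
    rcases eq_or_lt_of_le hmu with hmu1 | hmu1
    · -- case mu = 1 : all P i are equal, common Lyapunov function
      have hPeq : ∀ i, P i = P (σ 0) := by
        intro i
        refine herm_eq_of_posSemidef (hPherm i) (hPherm (σ 0)) ?_ ?_
        · have := hPmu (σ 0) i
          rwa [← hmu1, one_smul] at this
        · have := hPmu i (σ 0)
          rwa [← hmu1, one_smul] at this
      have hdecay : ∀ r ∈ Set.Icc (0:ℝ) s,
          x r ⬝ᵥ P (σ 0) *ᵥ x r ≤
            Real.exp (-lam * (r - 0)) * (x 0 ⬝ᵥ P (σ 0) *ᵥ x 0) := by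
        apply exp_decay_on
          (V' := fun r => (A (σ r) *ᵥ x r) ⬝ᵥ P (σ 0) *ᵥ x r
            + x r ⬝ᵥ P (σ 0) *ᵥ (A (σ r) *ᵥ x r))
        · intro r
          exact hasDerivAt_quad _ (hx r)
        · intro r _
          have := hq (σ r) (x r)
          rwa [hPeq (σ r)] at this
      have h1 := hdecay s ⟨hs, le_refl s⟩
      have h2 : Real.exp (-lam * (s - 0)) ≤ Real.exp (-(astar * lam) * s) := by
        apply Real.exp_le_exp.mpr
        have h2' : astar * lam * s ≤ lam * s :=
          mul_le_mul_of_nonneg_right (mul_le_of_le_one_left hlam.le hastar.2.le) hs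
        linarith
      calc x s ⬝ᵥ x s ≤ x s ⬝ᵥ P (σ 0) *ᵥ x s := hIleP _ _
        _ ≤ Real.exp (-lam * (s - 0)) * (x 0 ⬝ᵥ P (σ 0) *ᵥ x 0) := h1
        _ ≤ Real.exp (-(astar * lam) * s) * (x 0 ⬝ᵥ P (σ 0) *ᵥ x 0) :=
            mul_le_mul_of_nonneg_right h2 (hVnn _ _)
    · -- case mu > 1 : dwell time is positive, intervals cover [0, ∞)
      set δ := Real.log mu / ((1 - astar) * lam) with hδdef
      have hδ : 0 < δ :=
        div_pos (Real.log_pos hmu1) (mul_pos (by linarith [hastar.2]) hlam)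
      -- W k := Lyapunov value at switching instants
      have hW : ∀ k : ℕ, x (t k) ⬝ᵥ P (σ (t k)) *ᵥ x (t k) ≤
          Real.exp (-(astar * lam) * t k) * (x (t 0) ⬝ᵥ P (σ (t 0)) *ᵥ x (t 0)) := by
        intro k
        induction k with
        | zero => rw [ht0]; simp
        | succ k ih =>
          have hΔ := hdwell k
          have hlek : t k ≤ t (k+1) := (htmono (Nat.lt_succ_self k)).le
          have s1 : x (t (k+1)) ⬝ᵥ P (σ (t (k+1))) *ᵥ x (t (k+1)) ≤
              mu * (x (t (k+1)) ⬝ᵥ P (σ (t k)) *ᵥ x (t (k+1))) := hmuquad _ _ _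
          have s2 := hInt k (t (k+1)) ⟨hlek, le_refl _⟩
          have s3 : mu * (x (t (k+1)) ⬝ᵥ P (σ (t k)) *ᵥ x (t (k+1))) ≤
              (mu * Real.exp (-lam * (t (k+1) - t k))) *
                (x (t k) ⬝ᵥ P (σ (t k)) *ᵥ x (t k)) := by
            rw [mul_assoc]
            exact mul_le_mul_of_nonneg_left s2 (by linarith)
          have s4 : (mu * Real.exp (-lam * (t (k+1) - t k))) *
                (x (t k) ⬝ᵥ P (σ (t k)) *ᵥ x (t k)) ≤
              Real.exp (-(astar * lam) * (t (k+1) - t k)) *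
                (x (t k) ⬝ᵥ P (σ (t k)) *ᵥ x (t k)) :=
            mul_le_mul_of_nonneg_right (hexp _ hΔ) (hVnn _ _)
          have s5 : Real.exp (-(astar * lam) * (t (k+1) - t k)) *
                (x (t k) ⬝ᵥ P (σ (t k)) *ᵥ x (t k)) ≤
              Real.exp (-(astar * lam) * (t (k+1) - t k)) *
                (Real.exp (-(astar * lam) * t k) *
                  (x (t 0) ⬝ᵥ P (σ (t 0)) *ᵥ x (t 0))) :=
            mul_le_mul_of_nonneg_left ih (Real.exp_pos _).le
          have s6 : Real.exp (-(astar * lam) * (t (k+1) - t k)) *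
                (Real.exp (-(astar * lam) * t k) *
                  (x (t 0) ⬝ᵥ P (σ (t 0)) *ᵥ x (t 0))) =
              Real.exp (-(astar * lam) * t (k+1)) *
                (x (t 0) ⬝ᵥ P (σ (t 0)) *ᵥ x (t 0)) := by
            rw [← mul_assoc, ← Real.exp_add]
            ring_nf
          linarith
      -- the switching times tend to infinity
      have hgrow : ∀ k : ℕ, (k : ℝ) * δ ≤ t k := by
        intro k
        induction k with
        | zero => simp [ht0]
        | succ k ih =>
          have := hdwell k
          push_cast
          nlinarith
      -- find the interval containing s
      have hex : ∃ k, s < t k := by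
        obtain ⟨m, hm⟩ := exists_nat_gt (s / δ)
        refine ⟨m, ?_⟩
        have : s < (m : ℝ) * δ := by
          rw [div_lt_iff₀ hδ] at hm
          linarith
        exact this.trans_le (hgrow m)
      have hk0 : s < t (Nat.find hex) := Nat.find_spec hex
      have hk0ne : Nat.find hex ≠ 0 := by
        intro h
        rw [h, ht0] at hk0
        linarith
      obtain ⟨k, hk⟩ := Nat.exists_eq_succ_of_ne_zero hk0ne
      rw [hk, Nat.succ_eq_add_one] at hk0
      have htk : t k ≤ s :=
        le_of_not_gt (Nat.find_min hex (by rw [hk]; exact Nat.lt_succ_self k))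
      -- combine
      have c1 : x s ⬝ᵥ x s ≤ x s ⬝ᵥ P (σ (t k)) *ᵥ x s := hIleP _ _
      have c2 := hInt k s ⟨htk, hk0.le⟩
      have c3 : Real.exp (-lam * (s - t k)) ≤ Real.exp (-(astar * lam) * (s - t k)) := by
        apply Real.exp_le_exp.mpr
        have c3' : astar * lam * (s - t k) ≤ lam * (s - t k) :=
          mul_le_mul_of_nonneg_right (mul_le_of_le_one_left hlam.le hastar.2.le)
            (by linarith)
        linarith
      have c4 : x s ⬝ᵥ P (σ (t k)) *ᵥ x s ≤
          Real.exp (-(astar * lam) * (s - t k)) *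
            (x (t k) ⬝ᵥ P (σ (t k)) *ᵥ x (t k)) :=
        c2.trans (mul_le_mul_of_nonneg_right c3 (hVnn _ _))
      have c5 := hW k
      have c6 : x s ⬝ᵥ P (σ (t k)) *ᵥ x s ≤
          Real.exp (-(astar * lam) * s) * (x (t 0) ⬝ᵥ P (σ (t 0)) *ᵥ x (t 0)) := by
        have := c4.trans (mul_le_mul_of_nonneg_left c5 (Real.exp_pos _).le)
        rwa [← mul_assoc, ← Real.exp_add, show -(astar * lam) * (s - t k) +
          -(astar * lam) * t k = -(astar * lam) * s by ring] at this
      rw [ht0] at c6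
      exact c1.trans c6
  have hfin : x 0 ⬝ᵥ P (σ 0) *ᵥ x 0 ≤ lbar * (x 0 ⬝ᵥ x 0) :=
    quad_le_sup_eig (hPherm (σ 0)) (x 0)
  have hB : x s ⬝ᵥ x s ≤ Real.exp (-(astar * lam) * s) * (lbar * (x 0 ⬝ᵥ x 0)) :=
    hkey.trans (mul_le_mul_of_nonneg_left hfin (Real.exp_pos _).le)
  have hBnn : 0 ≤ Real.exp (-(astar * lam) * s) * (lbar * (x 0 ⬝ᵥ x 0)) :=
    (hself _).trans hB
  nlinarith [hself (x s)]
end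

section
/- Let P̄ be a symmetric positive definite block matrix P̄ = [[P, R],[R^T, S]] with P positive definite, and define the Schur complement Q = S - R^T P^{-1} R. If P̄ ≥ I, P̄ is symmetric, and Ā^T P̄ + P̄ Ā ≤ -λ P̄ where Ā is block upper triangular of the form [[A₁, H],[0, F]], then Q ≥ 0 and F^T Q + Q F ≤ -λ Q. -/
open Matrix

/-- Block reduction of the switched Lyapunov inequality: if
`P̄ = [[P, R],[Rᵀ, S]]` is symmetric positive definite with `P` positive definite,
`P̄ ≥ I`, and `Āᵀ P̄ + P̄ Ā ≤ -λ P̄` for block upper-triangular `Ā = [[A₁, H],[0, F]]`,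
then the Schur complement `Q = S - Rᵀ P⁻¹ R` satisfies `Q ≥ 0` and
`Fᵀ Q + Q F ≤ -λ Q`. -/
theorem schur_complement_lyapunov_reduction {n k : ℕ}
    (P : Matrix (Fin n) (Fin n) ℝ) (R : Matrix (Fin n) (Fin k) ℝ)
    (S : Matrix (Fin k) (Fin k) ℝ)
    (A₁ : Matrix (Fin n) (Fin n) ℝ) (H : Matrix (Fin n) (Fin k) ℝ)
    (F : Matrix (Fin k) (Fin k) ℝ)
    (lam : ℝ) (hlam : 0 < lam)
    (hPbar : (Matrix.fromBlocks P R Rᵀ S).PosDef)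
    (hP : P.PosDef)
    (hPbarI : (Matrix.fromBlocks P R Rᵀ S - 1).PosSemidef)
    (hLyap : ((-(lam • Matrix.fromBlocks P R Rᵀ S)) -
      ((Matrix.fromBlocks A₁ H 0 F)ᵀ * Matrix.fromBlocks P R Rᵀ S +
        Matrix.fromBlocks P R Rᵀ S * Matrix.fromBlocks A₁ H 0 F)).PosSemidef) :
    (S - Rᵀ * P⁻¹ * R).PosSemidef ∧
      ((-(lam • (S - Rᵀ * P⁻¹ * R))) -
        (Fᵀ * (S - Rᵀ * P⁻¹ * R) + (S - Rᵀ * P⁻¹ * R) * F)).PosSemidef := by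
  have hRH : Rᴴ = Rᵀ := by ext i j; simp
  haveI : Invertible P := hP.isUnit.invertible
  -- Part 1: the Schur complement is positive semidefinite
  have hQ : (S - Rᵀ * P⁻¹ * R).PosSemidef := by
    have h := (Matrix.PosDef.fromBlocks₁₁ R S hP).mp (by rw [hRH]; exact hPbar.posSemidef)
    rwa [hRH] at h
  refine ⟨hQ, ?_⟩
  set Q := S - Rᵀ * P⁻¹ * R with hQdef
  have hQT : Qᵀ = Q := by
    have := hQ.1
    rwa [Matrix.IsHermitian, conjTranspose_eq_transpose_of_trivial] at this
  set Pb := Matrix.fromBlocks P R Rᵀ S with hPbdef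
  set Ab := Matrix.fromBlocks A₁ H 0 F with hAbdef
  have hPbT : Pbᵀ = Pb := by
    have := hPbar.1
    rwa [Matrix.IsHermitian, conjTranspose_eq_transpose_of_trivial] at this
  set L : Matrix (Fin n ⊕ Fin k) (Fin k) ℝ :=
    Matrix.fromRows (-(P⁻¹ * R)) 1 with hLdef
  have hPL : Pb * L = Matrix.fromRows 0 Q := by
    rw [hPbdef, hLdef, fromBlocks_mul_fromRows, Matrix.mul_neg, Matrix.mul_neg,
      ← Matrix.mul_assoc P, Matrix.mul_inv_of_invertible, Matrix.one_mul,
      Matrix.mul_one, Matrix.mul_one, neg_add_cancel, ← Matrix.mul_assoc, hQdef]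
    congr 1
    abel_nf
  have hLmul : ∀ X : Matrix (Fin k) (Fin k) ℝ,
      Lᵀ * Matrix.fromRows (0 : Matrix (Fin n) (Fin k) ℝ) X = X := by
    intro X
    rw [hLdef, transpose_fromRows, fromCols_mul_fromRows]
    simp
  have hLP : Lᵀ * Pb = Matrix.fromCols 0 Q := by
    have : Lᵀ * Pb = (Pbᵀ * L)ᵀ := by
      rw [Matrix.transpose_mul, Matrix.transpose_transpose]
    rw [this, hPbT, hPL, transpose_fromRows, hQT, Matrix.transpose_zero]
  have hAbTQ : Abᵀ * Matrix.fromRows (0 : Matrix (Fin n) (Fin k) ℝ) Q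
      = Matrix.fromRows 0 (Fᵀ * Q) := by
    rw [hAbdef, fromBlocks_transpose, fromBlocks_mul_fromRows]
    simp
  have key : Lᵀ * ((-(lam • Pb)) - (Abᵀ * Pb + Pb * Ab)) * L
      = (-(lam • Q)) - (Fᵀ * Q + Q * F) := by
    rw [Matrix.mul_assoc, Matrix.sub_mul, Matrix.add_mul, Matrix.neg_mul,
      Matrix.smul_mul, hPL, Matrix.mul_assoc Abᵀ Pb L, hPL, hAbTQ,
      Matrix.mul_assoc Pb Ab L,
      Matrix.mul_sub, Matrix.mul_neg, Matrix.mul_smul, hLmul, Matrix.mul_add, hLmul,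
      ← Matrix.mul_assoc Lᵀ Pb (Ab * L), hLP]
    congr 2
    rw [hAbdef, hLdef, fromBlocks_mul_fromRows, fromCols_mul_fromRows]
    simp
  have h := hLyap.conjTranspose_mul_mul_same L
  have hLH : Lᴴ = Lᵀ := by ext i j; simp
  rw [hLH, key] at h
  exact h
end
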